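/- Let (b_k)_{k∈ℕ*} be complex numbers with Σ_{k∈ℕ*} |b_k| < +∞. If Σ_{k∈ℕ*} b_k / (kπ)^{4j} = 0 for every integer j ≥ 0, then b_k = 0 for every k ∈ ℕ*. -/

import Mathlib

lemma moment_first (c : ℕ → ℂ) (ρ : ℕ → ℝ) (hpos : ∀ k, 0 < ρ k)
    (hanti : StrictAnti ρ) (hs : Summable fun k => ‖c k‖)
    (hm : ∀ j, ∑' k : ℕ, c k * (ρ k : ℂ) ^ j = 0) : c 0 = 0 := by
  set C := ∑' k : ℕ, ‖c (k + 1)‖ with hC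
  have hs' : Summable fun k => ‖c (k + 1)‖ := by
    exact (summable_nat_add_iff 1).2 hs
  have hq0 : (0:ℝ) ≤ ρ 1 / ρ 0 := div_nonneg (hpos 1).le (hpos 0).le
  have hq1 : ρ 1 / ρ 0 < 1 := (div_lt_one (hpos 0)).2 (hanti (by norm_num))
  have key : ∀ j : ℕ, ‖c 0‖ ≤ C * (ρ 1 / ρ 0) ^ j := by
    intro j
    have hb1 : ∀ k : ℕ, ‖c k * (ρ k : ℂ) ^ j‖ ≤ ‖c k‖ * ρ 0 ^ j := by
      intro k
      have h1 : ‖(ρ k : ℂ) ^ j‖ = ρ k ^ j := by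
        rw [norm_pow, Complex.norm_real, Real.norm_eq_abs, abs_of_pos (hpos k)]
      rw [norm_mul, h1]
      have : ρ k ≤ ρ 0 := hanti.antitone (Nat.zero_le k)
      exact mul_le_mul_of_nonneg_left (pow_le_pow_left₀ (hpos k).le this j) (norm_nonneg _)
    have hsum : Summable fun k : ℕ => c k * (ρ k : ℂ) ^ j :=
      Summable.of_norm_bounded (hs.mul_right (ρ 0 ^ j)) hb1
    have h0 : c 0 * (ρ 0 : ℂ) ^ j + ∑' k : ℕ, c (k + 1) * (ρ (k + 1) : ℂ) ^ j = 0 := by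
      rw [← Summable.tsum_eq_zero_add hsum]; exact hm j
    have heq : c 0 * (ρ 0 : ℂ) ^ j = -(∑' k : ℕ, c (k + 1) * (ρ (k + 1) : ℂ) ^ j) := by
      linear_combination h0
    have hsn : Summable fun k : ℕ => ‖c (k + 1) * (ρ (k + 1) : ℂ) ^ j‖ := by
      apply Summable.of_nonneg_of_le (fun k => norm_nonneg _) (fun k => hb1 (k + 1))
      exact hs'.mul_right _
    have hstep : ‖c 0‖ * ρ 0 ^ j ≤ C * ρ 1 ^ j := by
      have lhs_eq : ‖c 0 * (ρ 0 : ℂ) ^ j‖ = ‖c 0‖ * ρ 0 ^ j := by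
        rw [norm_mul, norm_pow, Complex.norm_real, Real.norm_eq_abs, abs_of_pos (hpos 0)]
      calc ‖c 0‖ * ρ 0 ^ j = ‖∑' k : ℕ, c (k + 1) * (ρ (k + 1) : ℂ) ^ j‖ := by
            rw [← lhs_eq, heq, norm_neg]
        _ ≤ ∑' k : ℕ, ‖c (k + 1) * (ρ (k + 1) : ℂ) ^ j‖ := norm_tsum_le_tsum_norm hsn
        _ ≤ ∑' k : ℕ, ‖c (k + 1)‖ * ρ 1 ^ j := by
            apply Summable.tsum_le_tsum _ hsn (hs'.mul_right _)
            intro k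
            have h1 : ‖(ρ (k+1) : ℂ) ^ j‖ = ρ (k+1) ^ j := by
              rw [norm_pow, Complex.norm_real, Real.norm_eq_abs, abs_of_pos (hpos _)]
            rw [norm_mul, h1]
            have : ρ (k + 1) ≤ ρ 1 := hanti.antitone (Nat.succ_le_succ (Nat.zero_le k))
            exact mul_le_mul_of_nonneg_left (pow_le_pow_left₀ (hpos _).le this j) (norm_nonneg _)
        _ = C * ρ 1 ^ j := by rw [tsum_mul_right]
    have hρ0 : 0 < ρ 0 ^ j := pow_pos (hpos 0) j
    rw [div_pow, ← mul_div_assoc, le_div_iff₀ hρ0]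
    exact hstep
  have htend : Filter.Tendsto (fun j : ℕ => C * (ρ 1 / ρ 0) ^ j) Filter.atTop (nhds 0) := by
    have := tendsto_pow_atTop_nhds_zero_of_lt_one hq0 hq1
    simpa using this.const_mul C
  have : ‖c 0‖ ≤ 0 := ge_of_tendsto' htend key
  simpa using le_antisymm this (norm_nonneg _)

lemma moment_all (c : ℕ → ℂ) (ρ : ℕ → ℝ) (hpos : ∀ k, 0 < ρ k)
    (hanti : StrictAnti ρ) (hs : Summable fun k => ‖c k‖)
    (hm : ∀ j, ∑' k : ℕ, c k * (ρ k : ℂ) ^ j = 0) : ∀ m, c m = 0 := by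
  intro m
  induction m generalizing c ρ with
  | zero => exact moment_first c ρ hpos hanti hs hm
  | succ m ih =>
    have h0 : c 0 = 0 := moment_first c ρ hpos hanti hs hm
    apply ih (fun k => c (k + 1)) (fun k => ρ (k + 1)) (fun k => hpos _)
      (fun a b hab => hanti (Nat.succ_lt_succ hab)) ((summable_nat_add_iff 1).2 hs)
    intro j
    have hb1 : ∀ k : ℕ, ‖c k * (ρ k : ℂ) ^ j‖ ≤ ‖c k‖ * ρ 0 ^ j := by
      intro k
      have h1 : ‖(ρ k : ℂ) ^ j‖ = ρ k ^ j := by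
        rw [norm_pow, Complex.norm_real, Real.norm_eq_abs, abs_of_pos (hpos k)]
      rw [norm_mul, h1]
      exact mul_le_mul_of_nonneg_left
        (pow_le_pow_left₀ (hpos k).le (hanti.antitone (Nat.zero_le k)) j) (norm_nonneg _)
    have hsum : Summable fun k : ℕ => c k * (ρ k : ℂ) ^ j :=
      Summable.of_norm_bounded (hs.mul_right (ρ 0 ^ j)) hb1
    have h0' : c 0 * (ρ 0 : ℂ) ^ j + ∑' k : ℕ, c (k + 1) * (ρ (k + 1) : ℂ) ^ j = 0 := by
      rw [← Summable.tsum_eq_zero_add hsum]; exact hm j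
    rw [h0, zero_mul, zero_add] at h0'
    exact h0'

/-- Let `(b_k)_{k∈ℕ*}` be complex numbers with `Σ_{k∈ℕ*} |b_k| < ∞`.
If `Σ_{k∈ℕ*} b_k / (kπ)^{4j} = 0` for every integer `j ≥ 0`, then `b_k = 0` for every
`k ∈ ℕ*`.  (The sum over `ℕ*` is written as a sum over `k : ℕ` of the terms of index
`k + 1`.) -/
theorem statement9 (b : ℕ → ℂ)
    (hb : Summable fun k : ℕ => ‖b (k + 1)‖)
    (hmom : ∀ j : ℕ,
      ∑' k : ℕ, b (k + 1) / (((k + 1 : ℕ) : ℂ) * (Real.pi : ℂ)) ^ (4 * j) = 0) :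
    ∀ k : ℕ, 1 ≤ k → b k = 0 := by
  set ρ : ℕ → ℝ := fun k => 1 / (((k + 1 : ℕ) : ℝ) * Real.pi) ^ 4 with hρ
  have hpos : ∀ k, 0 < ρ k := by
    intro k
    have := Real.pi_pos
    positivity
  have hanti : StrictAnti ρ := by
    intro a b hab
    apply one_div_lt_one_div_of_lt
    · have := Real.pi_pos; positivity
    · apply pow_lt_pow_left₀ _ (by have := Real.pi_pos; positivity) (by norm_num)
      apply mul_lt_mul_of_pos_right _ Real.pi_pos
      exact_mod_cast Nat.succ_lt_succ hab
  have hm : ∀ j, ∑' k : ℕ, b (k + 1) * (ρ k : ℂ) ^ j = 0 := by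
    intro j
    rw [← hmom j]
    apply tsum_congr
    intro k
    have hne : (((k + 1 : ℕ) : ℂ) * (Real.pi : ℂ)) ≠ 0 := by
      apply mul_ne_zero
      · exact_mod_cast Nat.succ_ne_zero k
      · exact_mod_cast Real.pi_ne_zero
    simp only [hρ]
    push_cast
    rw [pow_mul, div_pow, one_pow, mul_one_div]
  intro k hk
  obtain ⟨m, rfl⟩ : ∃ m, k = m + 1 := ⟨k - 1, by omega⟩
  exact moment_all (fun k => b (k + 1)) ρ hpos hanti hb hm m
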